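/- Any DNF formula computing SM_{n,k} for k ≥ 2 has at least 2^(k-1)·(n-k+1) clauses (terms). -/

import Mathlib

/-- `y` occurs as a contiguous substring of `x`. -/
def occursIn {n k : ℕ} (x : Fin n → Bool) (y : Fin k → Bool) : Prop :=
  ∃ i, ∃ _ : i + k ≤ n, ∀ t : Fin k, x ⟨i + t.val, by have := t.isLt; omega⟩ = y t

/-- Evaluation of a literal over the `n + k` variables (text `⊕` pattern).
A literal is a pair (variable, required value). -/
def litEval {n k : ℕ} (x : Fin n → Bool) (y : Fin k → Bool) :
    (Fin n ⊕ Fin k) × Bool → Prop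
  | (Sum.inl i, b) => x i = b
  | (Sum.inr j, b) => y j = b

/-- The text `0^i p 0^{n-k-i}`. -/
def Xstr (n k i : ℕ) (p : Fin k → Bool) : Fin n → Bool :=
  fun v => if h : i ≤ v.1 ∧ v.1 < i + k then p ⟨v.1 - i, by omega⟩ else false

lemma Xstr_eq_true {n k i : ℕ} {p : Fin k → Bool} {v : Fin n}
    (h : Xstr n k i p v = true) :
    ∃ h : i ≤ v.1 ∧ v.1 < i + k, p ⟨v.1 - i, by omega⟩ = true := by
  unfold Xstr at h
  split at h
  · exact ⟨‹_›, h⟩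
  · simp at h

lemma Xstr_at {n k i : ℕ} (hi : i + k ≤ n) {p : Fin k → Bool} (t : Fin k) :
    Xstr n k i p ⟨i + t.1, by have := t.isLt; omega⟩ = p t := by
  unfold Xstr
  rw [dif_pos ⟨Nat.le_add_right _ _, Nat.add_lt_add_left t.isLt i⟩]
  congr 1
  ext
  simp

lemma occ_self {n k i : ℕ} (hi : i + k ≤ n) (p : Fin k → Bool) :
    occursIn (Xstr n k i p) p :=
  ⟨i, hi, fun t => Xstr_at hi t⟩

lemma forced_pos {n k : ℕ} (hk : 0 < k) {i m : ℕ} (hm : m + k ≤ n)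
    {p : Fin k → Bool} (hp : p ⟨0, hk⟩ = true)
    {z : Fin n → Bool} (hz : ∀ v, z v = true → Xstr n k i p v = true)
    (hocc : ∀ t : Fin k, z ⟨m + t.1, by have := t.isLt; omega⟩ = p t) :
    m = i := by
  set P : ℕ → Prop := fun l => ∃ h : l < k, p ⟨l, h⟩ = true with hP
  have h0 : P 0 := ⟨hk, hp⟩
  have hL : P (Nat.findGreatest P (k - 1)) := Nat.findGreatest_spec (by omega) h0
  set L := Nat.findGreatest P (k - 1) with hLdef
  obtain ⟨hLk, hpL⟩ := hL
  have h1 := hocc ⟨0, hk⟩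
  rw [hp] at h1
  obtain ⟨⟨him, _⟩, _⟩ := Xstr_eq_true (hz _ h1)
  have him' : i ≤ m := by simpa using him
  have h2 := hocc ⟨L, hLk⟩
  rw [hpL] at h2
  obtain ⟨⟨_, hlt⟩, hpv⟩ := Xstr_eq_true (hz _ h2)
  have hlt' : m + L < i + k := by simpa using hlt
  by_cases hmi : m = i
  · exact hmi
  · exfalso
    have hgt : L < m + L - i := by omega
    have hgr := Nat.findGreatest_is_greatest hgt (by omega)
    exact hgr ⟨by omega, hpv⟩

lemma key {n k : ℕ} (hk : 0 < k) {D : List (List ((Fin n ⊕ Fin k) × Bool))}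
    (hD : ∀ (x : Fin n → Bool) (y : Fin k → Bool),
      occursIn x y ↔ ∃ T ∈ D, ∀ l ∈ T, litEval x y l)
    {i j : ℕ} (hi : i + k ≤ n) (hj : j + k ≤ n)
    {p q : Fin k → Bool} (hp : p ⟨0, hk⟩ = true) (hq : q ⟨0, hk⟩ = true)
    {T : List ((Fin n ⊕ Fin k) × Bool)} (hT : T ∈ D)
    (h1 : ∀ l ∈ T, litEval (Xstr n k i p) p l)
    (h2 : ∀ l ∈ T, litEval (Xstr n k j q) q l) :
    i = j ∧ p = q := by
  set z : Fin n → Bool := fun v => Xstr n k i p v && Xstr n k j q v with hzdef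
  have hz1 : ∀ v, z v = true → Xstr n k i p v = true := by
    intro v h
    simp only [hzdef, Bool.and_eq_true] at h
    exact h.1
  have hz2 : ∀ v, z v = true → Xstr n k j q v = true := by
    intro v h
    simp only [hzdef, Bool.and_eq_true] at h
    exact h.2
  have hTp : ∀ l ∈ T, litEval z p l := by
    intro l hl
    have a1 := h1 l hl
    have a2 := h2 l hl
    match l with
    | (Sum.inl v, b) =>
      show z v = b
      have a1' : Xstr n k i p v = b := a1
      have a2' : Xstr n k j q v = b := a2
      simp [hzdef, a1', a2']
    | (Sum.inr t, b) => exact a1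
  have hTq : ∀ l ∈ T, litEval z q l := by
    intro l hl
    have a1 := h1 l hl
    have a2 := h2 l hl
    match l with
    | (Sum.inl v, b) =>
      show z v = b
      have a1' : Xstr n k i p v = b := a1
      have a2' : Xstr n k j q v = b := a2
      simp [hzdef, a1', a2']
    | (Sum.inr t, b) => exact a2
  obtain ⟨m, hm, hmo⟩ := (hD z p).mpr ⟨T, hT, hTp⟩
  obtain ⟨m', hm', hmo'⟩ := (hD z q).mpr ⟨T, hT, hTq⟩
  have hmi : m = i := forced_pos hk hm hp hz1 hmo
  have hmj : m' = j := forced_pos hk hm' hq hz2 hmo'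
  -- j ≤ m = i
  have e1 := hmo ⟨0, hk⟩
  rw [hp] at e1
  obtain ⟨⟨hjm, _⟩, _⟩ := Xstr_eq_true (hz2 _ e1)
  have hjm' : j ≤ m := by simpa using hjm
  -- i ≤ m' = j
  have e2 := hmo' ⟨0, hk⟩
  rw [hq] at e2
  obtain ⟨⟨him', _⟩, _⟩ := Xstr_eq_true (hz1 _ e2)
  have him'' : i ≤ m' := by simpa using him'
  have hij : i = j := by omega
  subst hmi hmj hij
  refine ⟨rfl, ?_⟩
  funext t
  have f1 := hmo t
  have f2 := hmo' t
  have g1 : (p t && q t) = p t := by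
    rw [← f1]
    simp [hzdef, Xstr_at hi t, Xstr_at hj t]
  have g2 : (p t && q t) = q t := by
    rw [← f2]
    simp [hzdef, Xstr_at hi t, Xstr_at hj t]
  rw [← g1, g2]

/-- Pattern built from a (k-1)-bit suffix, with leading bit 1. -/
def pat (k : ℕ) (q : Fin (k - 1) → Bool) : Fin k → Bool :=
  fun t => if h : t.1 = 0 then true else q ⟨t.1 - 1, by have := t.2; omega⟩

lemma pat_zero {k : ℕ} (hk : 0 < k) (q : Fin (k - 1) → Bool) :
    pat k q ⟨0, hk⟩ = true := by
  simp [pat]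

lemma pat_inj {k : ℕ} : Function.Injective (pat k) := by
  intro q1 q2 h
  funext s
  have := congrFun h ⟨s.1 + 1, by have := s.2; omega⟩
  simp only [pat] at this
  rw [dif_neg (by omega), dif_neg (by omega)] at this
  simpa using this

/-- Any DNF computing `SM_{n,k}` (for `k ≥ 2`) has at least `2^(k-1)·(n-k+1)`
terms. A DNF is a list of terms, each a list of literals. -/
theorem DNF_lower_bound (n k : ℕ) (hk : 2 ≤ k) (hkn : k ≤ n)
    (D : List (List ((Fin n ⊕ Fin k) × Bool)))
    (hD : ∀ (x : Fin n → Bool) (y : Fin k → Bool),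
      occursIn x y ↔ ∃ T ∈ D, ∀ l ∈ T, litEval x y l) :
    2 ^ (k - 1) * (n - k + 1) ≤ D.length := by
  have hk0 : 0 < k := by omega
  have hex : ∀ s : (Fin (k - 1) → Bool) × Fin (n - k + 1),
      ∃ m : Fin D.length,
        ∀ l ∈ D.get m, litEval (Xstr n k s.2.1 (pat k s.1)) (pat k s.1) l := by
    intro s
    have hi : s.2.1 + k ≤ n := by have := s.2.2; omega
    obtain ⟨T, hT, hP⟩ := (hD _ _).mp (occ_self hi (pat k s.1))
    obtain ⟨m, hm⟩ := List.mem_iff_get.mp hT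
    exact ⟨m, by rw [hm]; exact hP⟩
  choose f hf using hex
  have hinj : Function.Injective f := by
    intro s1 s2 h12
    have g1 := hf s1
    have g2 := hf s2
    rw [← h12] at g2
    have hi1 : s1.2.1 + k ≤ n := by have := s1.2.2; omega
    have hi2 : s2.2.1 + k ≤ n := by have := s2.2.2; omega
    obtain ⟨hij, hpq⟩ := key hk0 hD hi1 hi2 (pat_zero hk0 s1.1) (pat_zero hk0 s2.1)
      (D.get_mem (f s1)) g1 g2
    have hq : s1.1 = s2.1 := pat_inj hpq
    have hi : s1.2 = s2.2 := Fin.ext hij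
    exact Prod.ext hq hi
  have hcard := Fintype.card_le_of_injective f hinj
  simpa [Fintype.card_prod, Fintype.card_fun] using hcard
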